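/- arXiv:math-ph/0001040 — 2 statements merged into one kernel-verified Lean document; each statement's English description precedes it below -/
import Mathlib

section
/- Let U ⊆ ℂ be open and let h : U → ℂ be holomorphic and nowhere vanishing on U. Then the complex-valued function D(z) = Real.log(|h(z)|²) is real-differentiable on U and its Wirtinger derivative satisfies ∂D(z) = h'(z)/h(z) for every z ∈ U. -/
/-- The Wirtinger derivative ∂F(p) = ½(DF(p)(1) − i·DF(p)(i)) of a function F : ℂ → ℂ,
where DF(p) is the real Fréchet derivative of F at p. -/
noncomputable def wirtinger (F : ℂ → ℂ) (p : ℂ) : ℂ :=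
  (1 / 2 : ℂ) * (fderiv ℝ F p 1 - Complex.I * fderiv ℝ F p Complex.I)


open Complex

lemma normSq_hasFDerivAt (w : ℂ) :
    HasFDerivAt Complex.normSq
      ((2 * w.re) • Complex.reCLM + (2 * w.im) • Complex.imCLM) w := by
  have h1 : HasFDerivAt (fun z : ℂ => z.re * z.re + z.im * z.im)
      ((w.re • Complex.reCLM + w.re • Complex.reCLM) +
       (w.im • Complex.imCLM + w.im • Complex.imCLM)) w :=
    (Complex.reCLM.hasFDerivAt.mul Complex.reCLM.hasFDerivAt).add
      (Complex.imCLM.hasFDerivAt.mul Complex.imCLM.hasFDerivAt)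
  convert h1 using 1
  ext z
  simp [Complex.normSq_apply]
  ext z
  simp
  ring

lemma logNormSq_hasFDerivAt (g : ℂ → ℂ) (z a : ℂ) (hd : HasDerivAt g a z) (hz : g z ≠ 0) :
    HasFDerivAt (fun w => ((Real.log (Complex.normSq (g w)) : ℝ) : ℂ))
      (Complex.ofRealCLM.comp
        ((ContinuousLinearMap.smulRight (1 : ℝ →L[ℝ] ℝ) (Complex.normSq (g z))⁻¹).comp
          (((2 * (g z).re) • Complex.reCLM + (2 * (g z).im) • Complex.imCLM).comp
            ((ContinuousLinearMap.smulRight (1 : ℂ →L[ℂ] ℂ) a).restrictScalars ℝ)))) z := by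
  have hA : HasFDerivAt g ((ContinuousLinearMap.smulRight (1 : ℂ →L[ℂ] ℂ) a).restrictScalars ℝ) z :=
    hd.hasFDerivAt.restrictScalars ℝ
  have h1 := (normSq_hasFDerivAt (g z)).comp z hA
  have h2 : HasDerivAt Real.log (Complex.normSq (g z))⁻¹ (Complex.normSq (g z)) :=
    Real.hasDerivAt_log (by simpa [Complex.normSq_eq_zero] using hz)
  have h3 := (h2.hasFDerivAt.comp z h1)
  exact Complex.ofRealCLM.hasFDerivAt.comp z h3

/-- Let U ⊆ ℂ be open and let h be holomorphic and nowhere vanishing on U. Then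
D(z) = Real.log(|h(z)|²) is real-differentiable on U and its Wirtinger derivative
satisfies ∂D(z) = h'(z)/h(z) for every z ∈ U. -/
theorem stmt0 (U : Set ℂ) (hU : IsOpen U) (h : ℂ → ℂ)
    (hh : DifferentiableOn ℂ h U) (hne : ∀ z ∈ U, h z ≠ 0) :
    DifferentiableOn ℝ (fun z => (Real.log (‖h z‖ ^ 2) : ℂ)) U ∧
      ∀ z ∈ U, wirtinger (fun z => (Real.log (‖h z‖ ^ 2) : ℂ)) z
        = deriv h z / h z := by
  have hfun : (fun z => (Real.log (‖h z‖ ^ 2) : ℂ))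
      = fun z => ((Real.log (Complex.normSq (h z)) : ℝ) : ℂ) := by
    funext z; rw [Complex.sq_norm]
  have key : ∀ z ∈ U, HasFDerivAt (fun w => ((Real.log (Complex.normSq (h w)) : ℝ) : ℂ))
      (Complex.ofRealCLM.comp
        ((ContinuousLinearMap.smulRight (1 : ℝ →L[ℝ] ℝ) (Complex.normSq (h z))⁻¹).comp
          (((2 * (h z).re) • Complex.reCLM + (2 * (h z).im) • Complex.imCLM).comp
            ((ContinuousLinearMap.smulRight (1 : ℂ →L[ℂ] ℂ) (deriv h z)).restrictScalars ℝ)))) z := by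
    intro z hz
    have hd : HasDerivAt h (deriv h z) z :=
      ((hh z hz).differentiableAt (hU.mem_nhds hz)).hasDerivAt
    exact logNormSq_hasFDerivAt h z (deriv h z) hd (hne z hz)
  rw [hfun]
  constructor
  · exact fun z hz => ((key z hz).differentiableAt).differentiableWithinAt
  · intro z hz
    have hf := (key z hz).fderiv
    have hns : Complex.normSq (h z) ≠ 0 := by
      simpa [Complex.normSq_eq_zero] using hne z hz
    unfold wirtinger
    rw [hf, eq_div_iff (hne z hz)]
    simp only [ContinuousLinearMap.comp_apply, ContinuousLinearMap.smulRight_apply,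
      ContinuousLinearMap.coe_restrictScalars', ContinuousLinearMap.one_apply,
      ContinuousLinearMap.add_apply, ContinuousLinearMap.smul_apply, Pi.smul_apply,
      Complex.reCLM_apply, Complex.imCLM_apply, Complex.ofRealCLM_apply,
      smul_eq_mul]
    have hns2 : (h z).re ^ 2 + (h z).im ^ 2 ≠ 0 := by
      rw [Complex.normSq_apply] at hns; intro h0; apply hns; nlinarith
    have hns3 : (h z).im ^ 2 + (h z).re ^ 2 ≠ 0 := by
      rw [add_comm]; exact hns2
    apply Complex.ext <;>
      simp [Complex.normSq_apply, Complex.mul_re, Complex.mul_im, Complex.div_re,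
        Complex.div_im] <;>
      field_simp [Complex.normSq_apply] at * <;> ring
end

section
/- Let U, V ⊆ ℂ be open, let ψ₁ : U → V and ψ₂ : V → ℂ be holomorphic with nowhere vanishing derivatives. Then the composition ψ₂ ∘ ψ₁ has nowhere vanishing derivative on U and, for every (z,y) ∈ U × ℂ, δ₁(ψ₂∘ψ₁)(z,y) = δ₁(ψ₂)(Ψ₁(z,y)) + δ₁(ψ₁)(z,y). (This is the group 1-cocycle property of δ₁ underlying the primitivity of the coproduct Δδ₁ = 1⊗δ₁ + δ₁⊗1.) -/
/-- The lift of ψ to the frame bundle: Ψ(z,y) = (ψ(z), ψ'(z)·y). -/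
noncomputable def liftF (ψ : ℂ → ℂ) : ℂ × ℂ → ℂ × ℂ :=
  fun p => (ψ p.1, deriv ψ p.1 * p.2)

/-- δ₁(ψ)(z,y) = y·ψ''(z)/ψ'(z). -/
noncomputable def delta1 (ψ : ℂ → ℂ) : ℂ × ℂ → ℂ :=
  fun p => p.2 * (deriv (deriv ψ) p.1 / deriv ψ p.1)

/-- Group 1-cocycle property of δ₁: if ψ₁ : U → V and ψ₂ : V → ℂ are holomorphic with
nowhere vanishing derivatives, then ψ₂∘ψ₁ has nowhere vanishing derivative on U and
δ₁(ψ₂∘ψ₁)(z,y) = δ₁(ψ₂)(Ψ₁(z,y)) + δ₁(ψ₁)(z,y) for every (z,y) ∈ U × ℂ. -/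
theorem stmt4 (U V : Set ℂ) (hU : IsOpen U) (hV : IsOpen V)
    (ψ₁ ψ₂ : ℂ → ℂ) (h₁ : DifferentiableOn ℂ ψ₁ U) (hm : Set.MapsTo ψ₁ U V)
    (h₂ : DifferentiableOn ℂ ψ₂ V)
    (hne₁ : ∀ z ∈ U, deriv ψ₁ z ≠ 0) (hne₂ : ∀ z ∈ V, deriv ψ₂ z ≠ 0) :
    (∀ z ∈ U, deriv (ψ₂ ∘ ψ₁) z ≠ 0) ∧
      ∀ z ∈ U, ∀ y : ℂ,
        delta1 (ψ₂ ∘ ψ₁) (z, y) = delta1 ψ₂ (liftF ψ₁ (z, y)) + delta1 ψ₁ (z, y) := by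
  -- differentiability at points
  have hd₁ : ∀ z ∈ U, DifferentiableAt ℂ ψ₁ z := fun z hz =>
    h₁.differentiableAt (hU.mem_nhds hz)
  have hd₂ : ∀ w ∈ V, DifferentiableAt ℂ ψ₂ w := fun w hw =>
    h₂.differentiableAt (hV.mem_nhds hw)
  -- analyticity gives differentiability of derivatives
  have ha₁ : AnalyticOnNhd ℂ ψ₁ U := h₁.analyticOnNhd hU
  have ha₂ : AnalyticOnNhd ℂ ψ₂ V := h₂.analyticOnNhd hV
  have hd₁' : ∀ z ∈ U, DifferentiableAt ℂ (deriv ψ₁) z := fun z hz =>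
    ((ha₁.deriv z hz).differentiableAt)
  have hd₂' : ∀ w ∈ V, DifferentiableAt ℂ (deriv ψ₂) w := fun w hw =>
    ((ha₂.deriv w hw).differentiableAt)
  -- chain rule on U
  have hchain : ∀ z ∈ U, deriv (ψ₂ ∘ ψ₁) z = deriv ψ₂ (ψ₁ z) * deriv ψ₁ z := by
    intro z hz
    exact deriv_comp z (hd₂ _ (hm hz)) (hd₁ z hz)
  have hne : ∀ z ∈ U, deriv (ψ₂ ∘ ψ₁) z ≠ 0 := by
    intro z hz
    rw [hchain z hz]
    exact mul_ne_zero (hne₂ _ (hm hz)) (hne₁ z hz)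
  refine ⟨hne, ?_⟩
  intro z hz y
  -- second derivative of composition
  have heq : deriv (ψ₂ ∘ ψ₁) =ᶠ[nhds z] fun w => deriv ψ₂ (ψ₁ w) * deriv ψ₁ w := by
    filter_upwards [hU.mem_nhds hz] with w hw using hchain w hw
  have hcont : ContinuousAt ψ₁ z := (hd₁ z hz).continuousAt
  have hd2comp : DifferentiableAt ℂ (fun w => deriv ψ₂ (ψ₁ w)) z :=
    (hd₂' _ (hm hz)).comp z (hd₁ z hz)
  have hsecond : deriv (deriv (ψ₂ ∘ ψ₁)) z =
      deriv (deriv ψ₂) (ψ₁ z) * deriv ψ₁ z * deriv ψ₁ z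
        + deriv ψ₂ (ψ₁ z) * deriv (deriv ψ₁) z := by
    rw [heq.deriv_eq]
    rw [deriv_fun_mul hd2comp (hd₁' z hz)]
    have := deriv_comp z (hd₂' _ (hm hz)) (hd₁ z hz)
    simp only [Function.comp_def] at this
    rw [this]
  simp only [delta1, liftF, Function.comp]
  rw [hsecond, hchain z hz]
  have h1 := hne₁ z hz
  have h2 := hne₂ _ (hm hz)
  field_simp
end
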